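/- Let (F_n) be the Fibonacci numbers. For every integer n ≥ 0, F_{2n+1} = Σ_{j∈ℤ} [ C(2n, n−5j) − C(2n, n−5j−2) ], where the sum runs over all integers j (only finitely many terms are nonzero). -/

import Mathlib

/-- Binomial coefficient `C(m, j)` with integer lower index `j`,
equal to `0` when `j < 0` or `j > m`. -/
def ichoose (m : ℕ) (j : ℤ) : ℚ :=
  if j < 0 then 0 else (m.choose j.toNat : ℚ)

lemma ichoose_eq_zero_of_lt {m : ℕ} {j : ℤ} (h : (m : ℤ) < j) : ichoose m j = 0 := by
  unfold ichoose
  rw [if_neg (by omega)]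
  have : m < j.toNat := by omega
  simp [Nat.choose_eq_zero_of_lt this]

lemma ichoose_eq_zero_of_neg {m : ℕ} {j : ℤ} (h : j < 0) : ichoose m j = 0 := by
  simp [ichoose, h]

/-- Pascal's rule for `ichoose`. -/
lemma ichoose_succ (m : ℕ) (j : ℤ) :
    ichoose (m + 1) j = ichoose m j + ichoose m (j - 1) := by
  rcases lt_trichotomy j 0 with h | h | h
  · rw [ichoose_eq_zero_of_neg h, ichoose_eq_zero_of_neg h,
      ichoose_eq_zero_of_neg (by omega)]
    ring
  · subst h
    simp [ichoose]
  · unfold ichoose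
    rw [if_neg (by omega), if_neg (by omega), if_neg (by omega)]
    obtain ⟨k, hk⟩ : ∃ k : ℕ, j = (k : ℤ) + 1 := ⟨(j - 1).toNat, by omega⟩
    subst hk
    have h1 : ((k : ℤ) + 1).toNat = k + 1 := by omega
    have h2 : ((k : ℤ) + 1 - 1).toNat = k := by omega
    rw [h1, h2, Nat.choose_succ_succ]
    push_cast
    ring

/-- Symmetry of `ichoose` around `m/2` for even upper index `2*n`. -/
lemma ichoose_symm (n : ℕ) (k : ℤ) :
    ichoose (2 * n) ((n : ℤ) + k) = ichoose (2 * n) ((n : ℤ) - k) := by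
  rcases lt_trichotomy k 0 with h | h | h
  · rcases lt_or_ge ((n : ℤ) + k) 0 with h2 | h2
    · rw [ichoose_eq_zero_of_neg h2, ichoose_eq_zero_of_lt (by omega)]
    · unfold ichoose
      rw [if_neg (by omega), if_neg (by omega)]
      have : ((n : ℤ) - k).toNat = 2 * n - ((n : ℤ) + k).toNat := by omega
      rw [this, Nat.choose_symm (by omega)]
  · subst h; simp
  · rcases lt_or_ge ((n : ℤ) - k) 0 with h2 | h2
    · rw [ichoose_eq_zero_of_neg h2, ichoose_eq_zero_of_lt (by omega)]
    · unfold ichoose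
      rw [if_neg (by omega), if_neg (by omega)]
      have : ((n : ℤ) + k).toNat = 2 * n - ((n : ℤ) - k).toNat := by omega
      rw [this, Nat.choose_symm (by omega)]

/-- The auxiliary sum `S n r = Σ_j C(2n, n - 5j + r)`. -/
noncomputable def S (n : ℕ) (r : ℤ) : ℚ :=
  ∑ᶠ j : ℤ, ichoose (2 * n) ((n : ℤ) - 5 * j + r)

lemma S_support (n : ℕ) (r : ℤ) :
    (Function.support fun j : ℤ => ichoose (2 * n) ((n : ℤ) - 5 * j + r)).Finite := by
  apply Set.Finite.subset (Set.finite_Icc (-(n : ℤ) - r.natAbs) ((n : ℤ) + r.natAbs))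
  intro j hj
  simp only [Function.mem_support] at hj
  simp only [Set.mem_Icc]
  by_contra hc
  push_neg at hc
  apply hj
  rcases lt_or_ge ((n : ℤ) - 5 * j + r) 0 with h | h
  · exact ichoose_eq_zero_of_neg h
  · apply ichoose_eq_zero_of_lt
    omega

/-- Symmetry: `S n r = S n (-r)`. -/
lemma S_symm (n : ℕ) (r : ℤ) : S n r = S n (-r) := by
  unfold S
  rw [← finsum_comp_equiv (Equiv.neg ℤ)]
  apply finsum_congr
  intro j
  simp only [Equiv.neg_apply]
  have h : (n : ℤ) - 5 * (-j) + r = (n : ℤ) + (5 * j + r) := by ring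
  have h2 : (n : ℤ) - 5 * j + -r = (n : ℤ) - (5 * j + r) := by ring
  rw [h, h2, ichoose_symm]

/-- Periodicity: `S n (r + 5) = S n r`. -/
lemma S_period (n : ℕ) (r : ℤ) : S n (r + 5) = S n r := by
  unfold S
  rw [← finsum_comp_equiv (Equiv.addRight (1 : ℤ))]
  apply finsum_congr
  intro j
  simp only [Equiv.coe_addRight]
  congr 1
  ring

/-- Pascal recurrence for `S`. -/
lemma S_succ (n : ℕ) (r : ℤ) :
    S (n + 1) r = S n (r + 1) + 2 * S n r + S n (r - 1) := by
  have key : ∀ j : ℤ, ichoose (2 * (n + 1)) (((n : ℤ) + 1) - 5 * j + r)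
      = ichoose (2 * n) ((n : ℤ) - 5 * j + (r + 1))
        + (2 * ichoose (2 * n) ((n : ℤ) - 5 * j + r)
          + ichoose (2 * n) ((n : ℤ) - 5 * j + (r - 1))) := by
    intro j
    have h : 2 * (n + 1) = 2 * n + 1 + 1 := by ring
    rw [h, ichoose_succ, ichoose_succ, ichoose_succ]
    have e1 : ((n : ℤ) + 1) - 5 * j + r = (n : ℤ) - 5 * j + (r + 1) := by ring
    have e2 : ((n : ℤ) + 1) - 5 * j + r - 1 = (n : ℤ) - 5 * j + r := by ring
    have e3 : ((n : ℤ) + 1) - 5 * j + r - 1 - 1 = (n : ℤ) - 5 * j + (r - 1) := by ring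
    rw [e3, e2, e1]
    ring
  unfold S
  push_cast
  rw [finsum_congr key, finsum_add_distrib (S_support n (r + 1))
    (by
      apply Set.Finite.subset ((S_support n r).union (S_support n (r - 1)))
      intro j hj
      simp only [Function.mem_support] at hj
      simp only [Set.mem_union, Function.mem_support]
      by_contra hc
      push_neg at hc
      apply hj
      rw [hc.1, hc.2]
      ring),
    finsum_add_distrib (by
      apply Set.Finite.subset (S_support n r)
      intro j hj
      simp only [Function.mem_support] at hj ⊢
      intro h; apply hj; rw [h]; ring) (S_support n (r - 1)),
    show (fun j : ℤ => 2 * ichoose (2 * n) ((n : ℤ) - 5 * j + r))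
      = fun j : ℤ => ichoose (2 * n) ((n : ℤ) - 5 * j + r) * 2 from funext fun j => by ring,
    ← finsum_mul _ _]
  ring

lemma S_zero_zero : S 0 0 = 1 := by
  unfold S
  rw [finsum_eq_single _ (0 : ℤ)]
  · simp [ichoose]
  · intro j hj
    rcases lt_or_ge ((0 : ℤ) - 5 * j + 0) 0 with h | h
    · exact ichoose_eq_zero_of_neg h
    · apply ichoose_eq_zero_of_lt; simp; omega

lemma S_zero_of (r : ℤ) (h : ∀ j : ℤ, 5 * j ≠ r) : S 0 r = 0 := by
  unfold S
  rw [finsum_eq_zero_of_forall_eq_zero]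
  intro j
  rcases lt_or_ge ((0 : ℤ) - 5 * j + r) 0 with h2 | h2
  · exact ichoose_eq_zero_of_neg h2
  · apply ichoose_eq_zero_of_lt
    have := h j
    simp only [Nat.cast_zero]
    omega

/-- Main induction: `S n 0 - S n 2 = F_{2n+1}` and `S n 1 - S n 2 = F_{2n}`. -/
lemma main_induction (n : ℕ) :
    S n 0 - S n 2 = (Nat.fib (2 * n + 1) : ℚ)
      ∧ S n 1 - S n 2 = (Nat.fib (2 * n) : ℚ) := by
  induction n with
  | zero =>
    rw [S_zero_zero, S_zero_of 2 (by intro j; omega), S_zero_of 1 (by intro j; omega)]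
    simp
  | succ n ih =>
    obtain ⟨hA, hB⟩ := ih
    have h0 : S (n + 1) 0 = 2 * S n 0 + 2 * S n 1 := by
      rw [S_succ]
      have : S n (0 - 1) = S n 1 := by
        rw [show (0 : ℤ) - 1 = -1 by ring, ← S_symm]
      rw [this]
      norm_num
      ring
    have h1 : S (n + 1) 1 = S n 2 + 2 * S n 1 + S n 0 := by
      rw [S_succ]
      norm_num
    have h2 : S (n + 1) 2 = S n 1 + 3 * S n 2 := by
      rw [S_succ]
      have e3 : S n (2 + 1) = S n 2 := by
        rw [show (2 : ℤ) + 1 = -2 + 5 by ring, S_period, ← S_symm]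
      rw [e3]
      norm_num
      ring
    have fib1 : (Nat.fib (2 * (n + 1) + 1) : ℚ)
        = 2 * (Nat.fib (2 * n + 1) : ℚ) + (Nat.fib (2 * n) : ℚ) := by
      have : Nat.fib (2 * (n + 1) + 1) = 2 * Nat.fib (2 * n + 1) + Nat.fib (2 * n) := by
        have e : 2 * (n + 1) + 1 = (2 * n + 1) + 2 := by ring
        rw [e, Nat.fib_add_two, Nat.fib_add_two]
        ring
      exact_mod_cast congrArg (Nat.cast : ℕ → ℚ) this
    have fib2 : (Nat.fib (2 * (n + 1)) : ℚ)
        = (Nat.fib (2 * n + 1) : ℚ) + (Nat.fib (2 * n) : ℚ) := by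
      have : Nat.fib (2 * (n + 1)) = Nat.fib (2 * n + 1) + Nat.fib (2 * n) := by
        have e : 2 * (n + 1) = 2 * n + 2 := by ring
        rw [e, Nat.fib_add_two]
        ring
      exact_mod_cast congrArg (Nat.cast : ℕ → ℚ) this
    constructor
    · rw [h0, h2, fib1, ← hA, ← hB]; ring
    · rw [h1, h2, fib2, ← hA, ← hB]; ring

/-- `F_{2n+1} = Σ_{j∈ℤ} [ C(2n, n−5j) − C(2n, n−5j−2) ]`. -/
theorem fib_odd_eq_finsum_choose' (n : ℕ) :
    (Nat.fib (2 * n + 1) : ℚ) =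
      ∑ᶠ j : ℤ, (ichoose (2 * n) ((n : ℤ) - 5 * j)
        - ichoose (2 * n) ((n : ℤ) - 5 * j - 2)) := by
  have key : ∀ j : ℤ, ichoose (2 * n) ((n : ℤ) - 5 * j)
      - ichoose (2 * n) ((n : ℤ) - 5 * j - 2)
      = ichoose (2 * n) ((n : ℤ) - 5 * j + 0)
        - ichoose (2 * n) ((n : ℤ) - 5 * j + (-2)) := by
    intro j
    congr 2 <;> ring
  rw [finsum_congr key, finsum_sub_distrib (S_support n 0) (S_support n (-2))]
  have : (∑ᶠ j : ℤ, ichoose (2 * n) ((n : ℤ) - 5 * j + (-2))) = S n 2 := by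
    show S n (-2) = S n 2
    rw [← S_symm]
  rw [this]
  exact ((main_induction n).1).symm
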